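/- Let S : C(X,ℂ) → C(Y,ℂ) be a bijective additive map with S(1) = 1, S(r•f) = r•S(f) for all rationals r, S(conj f) = conj(S f), and ‖S(fg)‖ = ‖S(f)S(g)‖ for all f, g. Then ‖S(|f|)‖ = ‖S(f)‖ for every f ∈ C(X,ℂ), where |f| denotes the pointwise modulus of f. -/

import Mathlib

variable {X Y : Type*} [TopologicalSpace X] [CompactSpace X] [T2Space X]
  [TopologicalSpace Y] [CompactSpace Y] [T2Space Y]

theorem stmt9 (S : C(X, ℂ) → C(Y, ℂ)) (hbij : Function.Bijective S)
    (hadd : ∀ f g : C(X, ℂ), S (f + g) = S f + S g)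
    (hone : S 1 = 1)
    (hq : ∀ (r : ℚ) (f : C(X, ℂ)), S ((r : ℂ) • f) = (r : ℂ) • S f)
    (hstar : ∀ f : C(X, ℂ), S (star f) = star (S f))
    (hnm : ∀ f g : C(X, ℂ), ‖S (f * g)‖ = ‖S f * S g‖) :
    ∀ f : C(X, ℂ),
      ‖S ((⟨Complex.ofReal, Complex.continuous_ofReal⟩ : C(ℝ, ℂ)).comp
          ((⟨fun z : ℂ => ‖z‖, continuous_norm⟩ : C(ℂ, ℝ)).comp f))‖ = ‖S f‖ := by
  intro f
  set A : C(X, ℂ) := (⟨Complex.ofReal, Complex.continuous_ofReal⟩ : C(ℝ, ℂ)).comp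
      ((⟨fun z : ℂ => ‖z‖, continuous_norm⟩ : C(ℂ, ℝ)).comp f) with hA
  have hAstar : star A = A := by
    ext x
    simp [hA, Complex.ext_iff]
  have hAA : A * A = f * star f := by
    ext x
    simp only [hA, ContinuousMap.mul_apply, ContinuousMap.comp_apply,
      ContinuousMap.coe_mk, ContinuousMap.star_apply]
    rw [Complex.star_def, Complex.mul_conj, ← Complex.ofReal_mul, ← Complex.sq_norm, sq]
  have h1 : ‖S A‖ * ‖S A‖ = ‖S f‖ * ‖S f‖ := by
    calc ‖S A‖ * ‖S A‖ = ‖S A * star (S A)‖ := (CStarRing.norm_self_mul_star).symm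
      _ = ‖S A * S A‖ := by rw [← hstar, hAstar]
      _ = ‖S (A * A)‖ := (hnm A A).symm
      _ = ‖S (f * star f)‖ := by rw [hAA]
      _ = ‖S f * S (star f)‖ := hnm f (star f)
      _ = ‖S f * star (S f)‖ := by rw [hstar]
      _ = ‖S f‖ * ‖S f‖ := CStarRing.norm_self_mul_star
  exact (mul_self_inj (norm_nonneg (S A)) (norm_nonneg (S f))).mp h1
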